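/- If ν = π_{2α} is the Pareto distribution with density 2α x^{-2α-1} 1_{[1,∞)}(x), then G(t) = (1 - t^{-α})₊², H(t) = 2(1 - t^{-α})₊, and the Kendall renewal function equals R(t) = (t^α − 1)(1 − 3t^α + 4t^{2α})/(2t^α − 1)² for t > 1 (and 0 for t ≤ 1). -/

import Mathlib

open MeasureTheory Real Filter Set

lemma dens_integral' (α : ℝ) (hα : 0 < α) (μ : Measure ℝ) (g : ℝ → ℝ) :
    ∫ x, g x ∂(μ.withDensity
      (fun x => ENNReal.ofReal (if 1 ≤ x then 2 * α * x ^ (-(2 * α) - 1) else 0)))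
    = ∫ x, (if 1 ≤ x then 2 * α * x ^ (-(2 * α) - 1) else 0) * g x ∂μ := by
  have hmeas : Measurable fun x : ℝ =>
      Real.toNNReal (if 1 ≤ x then 2 * α * x ^ (-(2 * α) - 1) else 0) := by
    apply Measurable.real_toNNReal
    exact Measurable.ite measurableSet_Ici ((measurable_id.pow_const _).const_mul _) measurable_const
  have h := integral_withDensity_eq_integral_smul (μ := μ) hmeas g
  have hrw : (fun x : ℝ => ENNReal.ofReal (if 1 ≤ x then 2 * α * x ^ (-(2 * α) - 1) else 0))
      = fun x : ℝ => ((Real.toNNReal (if 1 ≤ x then 2 * α * x ^ (-(2 * α) - 1) else 0) : NNReal) : ENNReal) := rfl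
  rw [hrw, h]
  congr 1
  ext x
  rw [NNReal.smul_def, smul_eq_mul, Real.coe_toNNReal]
  split_ifs with h1
  · positivity
  · exact le_refl 0

lemma G_val' (α t : ℝ) (hα : 0 < α) (ht : 1 < t) :
    ∫ x, (if 1 ≤ x then 2 * α * x ^ (-(2 * α) - 1) else 0) * max (1 - x ^ α / t ^ α) 0
      = (1 - t ^ (-α)) ^ 2 := by
  have ht0 : (0:ℝ) < t := lt_trans one_pos ht
  have htα : 0 < t ^ α := rpow_pos_of_pos ht0 α
  have hfun : (fun x => (if 1 ≤ x then 2 * α * x ^ (-(2 * α) - 1) else 0) * max (1 - x ^ α / t ^ α) 0)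
      = Set.indicator (Set.Icc 1 t) (fun x => 2 * α * x ^ (-(2 * α) - 1) * (1 - x ^ α / t ^ α)) := by
    ext x
    by_cases h1 : 1 ≤ x
    · by_cases h2 : x ≤ t
      · rw [Set.indicator_of_mem (Set.mem_Icc.mpr ⟨h1, h2⟩)]
        simp only [if_pos h1]
        have hle : x ^ α ≤ t ^ α := Real.rpow_le_rpow (by linarith) h2 hα.le
        have : x ^ α / t ^ α ≤ 1 := (div_le_one htα).mpr hle
        rw [max_eq_left (by linarith)]
      · rw [Set.indicator_of_notMem (by simp [Set.mem_Icc, h2])]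
        have hle : t ^ α ≤ x ^ α := Real.rpow_le_rpow ht0.le (le_of_not_ge h2) hα.le
        have h3 : 1 ≤ x ^ α / t ^ α := (one_le_div htα).mpr hle
        rw [max_eq_right (by linarith), mul_zero]
    · rw [Set.indicator_of_notMem (by simp [Set.mem_Icc, h1])]
      simp [h1]
  rw [hfun, integral_indicator measurableSet_Icc, MeasureTheory.integral_Icc_eq_integral_Ioc,
    ← intervalIntegral.integral_of_le ht.le]
  have hne : (0:ℝ) ∉ Set.uIcc 1 t := by
    rw [Set.uIcc_of_le ht.le]; intro h; exact absurd h.1 (by norm_num)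
  have heq : Set.EqOn (fun x => 2 * α * x ^ (-(2 * α) - 1) * (1 - x ^ α / t ^ α))
      (fun x => 2 * α * x ^ (-(2 * α) - 1) - (2 * α * t ^ (-α)) * x ^ (-α - 1)) (Set.uIcc 1 t) := by
    intro x hx
    rw [Set.uIcc_of_le ht.le] at hx
    have hx0 : (0:ℝ) < x := lt_of_lt_of_le one_pos hx.1
    have h1 : x ^ (-(2 * α) - 1) * x ^ α = x ^ (-α - 1) := by
      rw [← Real.rpow_add hx0]; ring_nf
    have h2 : (t ^ α)⁻¹ = t ^ (-α) := by rw [← Real.rpow_neg ht0.le]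
    have h3 : 2 * α * x ^ (-(2*α) - 1) * (1 - x ^ α / t ^ α)
        = 2 * α * x ^ (-(2*α) - 1) - 2 * α * (x ^ (-(2*α) - 1) * x ^ α) * (t ^ α)⁻¹ := by
      ring
    simp only [h3, h1, h2]
    ring
  rw [intervalIntegral.integral_congr heq]
  have i1 : IntervalIntegrable (fun x => x ^ (-(2 * α) - 1)) volume 1 t :=
    intervalIntegral.intervalIntegrable_rpow (Or.inr hne)
  have i2 : IntervalIntegrable (fun x => x ^ (-α - 1)) volume 1 t :=
    intervalIntegral.intervalIntegrable_rpow (Or.inr hne)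
  rw [intervalIntegral.integral_sub ((i1.const_mul _)) ((i2.const_mul _)),
    intervalIntegral.integral_const_mul, intervalIntegral.integral_const_mul,
    integral_rpow (Or.inr ⟨by intro h; nlinarith, hne⟩),
    integral_rpow (Or.inr ⟨by intro h; nlinarith, hne⟩)]
  have e1 : -(2 * α) - 1 + 1 = -(2*α) := by ring
  have e2 : -α - 1 + 1 = -α := by ring
  rw [e1, e2, Real.one_rpow, Real.one_rpow]
  have e3 : t ^ (-(2*α)) = (t ^ (-α)) ^ 2 := by
    rw [← Real.rpow_natCast (t ^ (-α)) 2, ← Real.rpow_mul ht0.le]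
    push_cast
    ring_nf
  rw [e3]
  field_simp
  ring

lemma G_zero' (α t : ℝ) (hα : 0 < α) (ht0 : 0 < t) (ht : t ≤ 1) :
    ∫ x, (if 1 ≤ x then 2 * α * x ^ (-(2 * α) - 1) else 0) * max (1 - x ^ α / t ^ α) 0
      = 0 := by
  have : (fun x => (if 1 ≤ x then 2 * α * x ^ (-(2 * α) - 1) else 0) * max (1 - x ^ α / t ^ α) 0)
      = fun _ => (0:ℝ) := by
    ext x
    by_cases h1 : 1 ≤ x
    · have hle : t ^ α ≤ x ^ α := Real.rpow_le_rpow ht0.le (le_trans ht h1) hα.le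
      have htα : 0 < t ^ α := Real.rpow_pos_of_pos ht0 α
      have h3 : 1 ≤ x ^ α / t ^ α := (one_le_div htα).mpr hle
      rw [max_eq_right (by linarith), mul_zero]
    · simp [h1]
  rw [this, integral_zero]

lemma H_val' (α t : ℝ) (hα : 0 < α) (ht : 1 < t) :
    ∫ x in Set.Ioc 0 t, (if 1 ≤ x then 2 * α * x ^ (-(2 * α) - 1) else 0) * x ^ α
      = 2 * (1 - t ^ (-α)) := by
  have ht0 : (0:ℝ) < t := lt_trans one_pos ht
  rw [← integral_indicator measurableSet_Ioc]
  have hfun : Set.indicator (Set.Ioc 0 t)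
        (fun x => (if 1 ≤ x then 2 * α * x ^ (-(2 * α) - 1) else 0) * x ^ α)
      = Set.indicator (Set.Icc 1 t) (fun x => 2 * α * x ^ (-α - 1)) := by
    ext x
    by_cases hm : x ∈ Set.Icc 1 t
    · have hx1 : (1:ℝ) ≤ x := hm.1
      have hx0 : (0:ℝ) < x := lt_of_lt_of_le one_pos hx1
      rw [Set.indicator_of_mem hm, Set.indicator_of_mem (Set.mem_Ioc.mpr ⟨hx0, hm.2⟩), if_pos hx1]
      have h1 : x ^ (-(2 * α) - 1) * x ^ α = x ^ (-α - 1) := by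
        rw [← Real.rpow_add hx0]; ring_nf
      calc 2 * α * x ^ (-(2 * α) - 1) * x ^ α
          = 2 * α * (x ^ (-(2 * α) - 1) * x ^ α) := by ring
        _ = 2 * α * x ^ (-α - 1) := by rw [h1]
    · rw [Set.indicator_of_notMem hm]
      by_cases hm2 : x ∈ Set.Ioc 0 t
      · rw [Set.indicator_of_mem hm2]
        have : ¬ (1 ≤ x) := fun h => hm ⟨h, hm2.2⟩
        simp [this]
      · rw [Set.indicator_of_notMem hm2]
  rw [hfun, integral_indicator measurableSet_Icc, MeasureTheory.integral_Icc_eq_integral_Ioc,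
    ← intervalIntegral.integral_of_le ht.le]
  have hne : (0:ℝ) ∉ Set.uIcc 1 t := by
    rw [Set.uIcc_of_le ht.le]; intro h; exact absurd h.1 (by norm_num)
  rw [intervalIntegral.integral_const_mul, integral_rpow (Or.inr ⟨by intro h; nlinarith, hne⟩)]
  have e2 : -α - 1 + 1 = -α := by ring
  rw [e2, Real.one_rpow, mul_div_assoc' , div_eq_iff (neg_ne_zero.mpr (ne_of_gt hα))]
  ring

lemma H_zero' (α t : ℝ) (ht : t ≤ 1) :
    ∫ x in Set.Ioc 0 t, (if 1 ≤ x then 2 * α * x ^ (-(2 * α) - 1) else 0) * x ^ α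
      = 0 := by
  rw [MeasureTheory.integral_Ioc_eq_integral_Ioo]
  apply setIntegral_eq_zero_of_forall_eq_zero
  intro x hx
  have : ¬ (1 ≤ x) := by
    intro h; exact absurd (lt_of_lt_of_le hx.2 ht) (not_lt.mpr h)
  simp [this]

/-- Kendall renewal function for the Pareto unit step distribution `π_{2α}`. -/
theorem kendall_renewal_pareto
    (α : ℝ) (hα : 0 < α)
    (ν : Measure ℝ)
    (hν : ν = volume.withDensity
      (fun x => ENNReal.ofReal (if 1 ≤ x then 2 * α * x ^ (-(2 * α) - 1) else 0)))
    (G H R : ℝ → ℝ)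
    (hG : ∀ t, G t = ∫ x, max (1 - x ^ α / t ^ α) 0 ∂ν)
    (hH : ∀ t, H t = ∫ x in Set.Ioc 0 t, x ^ α ∂ν)
    (hR : ∀ t, R t = G t / (1 - G t) + H t / (t ^ α * (1 - G t) ^ 2)) :
    ∀ t : ℝ, 0 < t →
      G t = (max (1 - t ^ (-α)) 0) ^ 2 ∧
      H t = 2 * max (1 - t ^ (-α)) 0 ∧
      R t = if 1 < t then
          (t ^ α - 1) * (1 - 3 * t ^ α + 4 * t ^ (2 * α)) / (2 * t ^ α - 1) ^ 2
        else 0 := by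
  intro t ht0
  have hGt : G t = ∫ x, (if 1 ≤ x then 2 * α * x ^ (-(2 * α) - 1) else 0)
      * max (1 - x ^ α / t ^ α) 0 := by
    rw [hG t, hν, dens_integral' α hα]
  have hHt : H t = ∫ x in Set.Ioc 0 t,
      (if 1 ≤ x then 2 * α * x ^ (-(2 * α) - 1) else 0) * x ^ α := by
    rw [hH t, hν, restrict_withDensity measurableSet_Ioc,
      dens_integral' α hα (volume.restrict (Set.Ioc 0 t))]
  by_cases ht : 1 < t
  · have hinv : t ^ (-α) < 1 :=
      Real.rpow_lt_one_of_one_lt_of_neg ht (neg_neg_iff_pos.mpr hα)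
    have hmax : max (1 - t ^ (-α)) 0 = 1 - t ^ (-α) := max_eq_left (by linarith)
    have hGv : G t = (1 - t ^ (-α)) ^ 2 := by rw [hGt, G_val' α t hα ht]
    have hHv : H t = 2 * (1 - t ^ (-α)) := by rw [hHt, H_val' α t hα ht]
    refine ⟨by rw [hGv, hmax], by rw [hHv, hmax], ?_⟩
    rw [if_pos ht, hR t, hGv, hHv]
    have hsinv : t ^ (-α) = (t ^ α)⁻¹ := by rw [Real.rpow_neg ht0.le]
    have hs1 : 1 < t ^ α := by
      rw [show (1:ℝ) = 1 ^ α by rw [Real.one_rpow]]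
      exact Real.rpow_lt_rpow (by norm_num) ht hα
    set s := t ^ α with hsdef
    have hs0 : (0:ℝ) < s := lt_trans one_pos hs1
    have h2α : t ^ (2 * α) = s ^ 2 := by
      rw [show (2:ℝ) * α = α + α by ring, Real.rpow_add ht0, sq]
    rw [hsinv, h2α]
    have hden : 1 - (1 - s⁻¹) ^ 2 = (2 * s - 1) / s ^ 2 := by
      field_simp
      ring
    rw [hden]
    have hsne : s ≠ 0 := ne_of_gt hs0
    have h2s : 2 * s - 1 ≠ 0 := by intro h; nlinarith
    field_simp
    ring
  · push_neg at ht
    have hinv : 1 ≤ t ^ (-α) :=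
      Real.one_le_rpow_of_pos_of_le_one_of_nonpos ht0 ht (by linarith)
    have hmax : max (1 - t ^ (-α)) 0 = 0 := max_eq_right (by linarith)
    have hGv : G t = 0 := by rw [hGt, G_zero' α t hα ht0 ht]
    have hHv : H t = 0 := by rw [hHt, H_zero' α t ht]
    refine ⟨by rw [hGv, hmax]; ring, by rw [hHv, hmax]; ring, ?_⟩
    rw [if_neg (not_lt.mpr ht), hR t, hGv, hHv]
    simp
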